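/- If μ ≥ 3 (so a second-order Noether condition L₂ = (1/2)∂²/∂z₁² + a_{2,2}∂/∂z₂ + ⋯ + a_{2,n}∂/∂zₙ annihilates H at ẑₑ), then the vector v = [1, 0,…,0, 2a_{2,2},…,2a_{2,n}]ᵀ ∈ ℂ^{2n} is a null vector of the Jacobian of the augmented system G(z,λ) = (H(z), H'(z)λ, λ₁−1) evaluated at (ẑₑ, λ̂ₑ) where λ̂ₑ = e₁. -/

import Mathlib

open MvPolynomial Matrix

/-- The augmented (deflated) system `G(z,λ) = (H(z), H'(z)·λ, λ₁ − 1)` as a system of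
`2n+1` polynomials in the `2n` variables `(z, λ)`. -/
noncomputable def augSys {n : ℕ} (H : Fin (n + 1) → MvPolynomial (Fin (n + 1)) ℂ) :
    (Fin (n + 1) ⊕ (Fin (n + 1) ⊕ Unit)) → MvPolynomial (Fin (n + 1) ⊕ Fin (n + 1)) ℂ :=
  Sum.elim (fun i => MvPolynomial.rename Sum.inl (H i))
    (Sum.elim
      (fun i => ∑ j, MvPolynomial.rename Sum.inl (MvPolynomial.pderiv j (H i)) *
          MvPolynomial.X (Sum.inr j))
      (fun _ => MvPolynomial.X (Sum.inr 0) - 1))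

/-- The Jacobian of the augmented system at a point `(z, λ)`. -/
noncomputable def augJac {n : ℕ} (H : Fin (n + 1) → MvPolynomial (Fin (n + 1)) ℂ)
    (q : Fin (n + 1) ⊕ Fin (n + 1) → ℂ) :
    Matrix (Fin (n + 1) ⊕ (Fin (n + 1) ⊕ Unit)) (Fin (n + 1) ⊕ Fin (n + 1)) ℂ :=
  Matrix.of fun r col => MvPolynomial.eval q (MvPolynomial.pderiv col (augSys H r))

lemma pderiv_inr_rename_inl {σ τ R : Type*} [CommSemiring R] (p : MvPolynomial σ R) (k : τ) :
    MvPolynomial.pderiv (Sum.inr k) (MvPolynomial.rename (Sum.inl : σ → σ ⊕ τ) p) = 0 := by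
  induction p using MvPolynomial.induction_on with
  | C a => simp
  | add p q hp hq => simp [hp, hq]
  | mul_X p j h => simp [h, pderiv_mul]

/-- If `μ ≥ 3`, so that a second-order Noether condition
`L₂ = (1/2)∂²/∂z₁² + Σ_{j≥2} a_{2,j} ∂/∂zⱼ` annihilates `H` at `ẑₑ`, then
`v = [1,0,…,0, 2a_{2,2},…,2a_{2,n}]ᵀ` is a null vector of the Jacobian of the augmented
system `G(z,λ) = (H(z), H'(z)λ, λ₁−1)` at `(ẑₑ, e₁)`. -/
theorem augmented_jacobian_null_vector {n : ℕ}
    (H : Fin (n + 1) → MvPolynomial (Fin (n + 1)) ℂ)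
    (ze : Fin (n + 1) → ℂ) (a : Fin (n + 1) → ℂ) (ha0 : a 0 = 0)
    (hzero : ∀ i, MvPolynomial.eval ze (H i) = 0)
    (hfirst : ∀ i, MvPolynomial.eval ze (MvPolynomial.pderiv 0 (H i)) = 0)
    (hL2 : ∀ i, (1 / 2 : ℂ) *
          MvPolynomial.eval ze (MvPolynomial.pderiv 0 (MvPolynomial.pderiv 0 (H i))) +
        ∑ j, a j * MvPolynomial.eval ze (MvPolynomial.pderiv j (H i)) = 0) :
    (augJac H (Sum.elim ze fun j => if j = 0 then 1 else 0)) *ᵥ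
        (Sum.elim (fun i => if i = 0 then (1 : ℂ) else 0)
          (fun j => if j = 0 then 0 else 2 * a j)) = 0 := by
  funext r
  have hq : ∀ p : MvPolynomial (Fin (n+1)) ℂ,
      eval (Sum.elim ze fun j : Fin (n+1) => if j = 0 then (1:ℂ) else 0) (rename Sum.inl p) = eval ze p := by
    intro p; rw [eval_rename]; rfl
  cases r with
  | inl i =>
    simp only [mulVec, dotProduct, augJac, augSys, of_apply, Sum.elim_inl, Fintype.sum_sum_type,
      pderiv_rename Sum.inl_injective, pderiv_inr_rename_inl, eval_rename, map_zero, zero_mul,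
      Finset.sum_const_zero, add_zero, mul_ite, mul_one, mul_zero, Finset.sum_ite_eq',
      Finset.mem_univ, if_true, Pi.zero_apply]
    exact hfirst i
  | inr r =>
    cases r with
    | inr u =>
      simp [mulVec, dotProduct, augJac, augSys, Fintype.sum_sum_type, Pi.single_apply,
        apply_ite (eval _), mul_ite]
    | inl i =>
      have hcomp : ((Sum.elim ze fun j : Fin (n+1) => if j = 0 then (1:ℂ) else 0) ∘ Sum.inl) = ze := rfl
      simp only [mulVec, dotProduct, augJac, augSys, of_apply, Sum.elim_inr, Sum.elim_inl,
        Fintype.sum_sum_type, map_sum, pderiv_mul, pderiv_X, pderiv_rename Sum.inl_injective,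
        pderiv_inr_rename_inl, hq, Pi.zero_apply, map_add, _root_.map_mul, eval_X, Sum.elim_inr,
        Pi.single_apply, reduceCtorEq, Sum.inr.injEq, if_false, apply_ite (eval _), _root_.map_one,
        map_zero, mul_zero, zero_mul, add_zero, zero_add, mul_ite, ite_mul, mul_one,
        Finset.sum_ite_eq', Finset.sum_ite_eq, Finset.mem_univ, if_true, eval_rename, hcomp]
      have h2 : (∑ x, if x = 0 then 0
            else MvPolynomial.eval ze (MvPolynomial.pderiv x (H i)) * (2 * a x)) =
          2 * ∑ j, a j * MvPolynomial.eval ze (MvPolynomial.pderiv j (H i)) := by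
        rw [Finset.mul_sum]
        refine Finset.sum_congr rfl fun x _ => ?_
        by_cases h : x = 0
        · simp [h, ha0]
        · simp only [h, if_false]; ring
      simp only [ite_self, zero_add, Finset.sum_ite_eq, Finset.sum_ite_eq', Finset.mem_univ, if_true]
      rw [h2]
      have h3 := hL2 i
      linear_combination 2 * h3
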